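/- Let R ⊆ ℝ² be a convex set. If there exist distinct integers s₁,…,s_m (m ≥ 1) forming a cycle of R (i.e., (s_i, s_{i+1}) ∈ R for i < m and (s_m, s₁) ∈ R), then there exist integers a, b with (a,b) ∈ R and (b,a) ∈ R (i.e., R has a cycle of length at most two). -/

import Mathlib

open Finset

section CycleHelpers

variable {m : ℕ} [NeZero m]

open Fin.NatCast Fin.CommRing in
/-- Cyclic closure: a predicate closed under successor on `Fin m` that holds somewhere
holds everywhere. -/
lemma cyc_all (Q : Fin m → Prop) (h : ∀ i, Q i → Q (i + 1)) (i : Fin m) (hi : Q i)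
    (j : Fin m) : Q j := by
  have key : ∀ n : ℕ, Q (i + (n : Fin m)) := by
    intro n
    induction n with
    | zero => simpa using hi
    | succ n ih =>
        have : ((n+1 : ℕ) : Fin m) = (n : Fin m) + 1 := by push_cast; ring
        rw [this, ← add_assoc]
        exact h _ ih
  have := key (j - i).val
  rwa [Fin.cast_val_eq_self, add_sub_cancel] at this

lemma part_le (g : Fin m → ℤ) (P : Finset (Fin m)) (e : Fin m ≃ Fin m)
    (hpair : ∀ i ∈ P, g i + g (e i) ≤ -2) (hout : ∀ i ∈ P, e i ∉ P)
    (hrest : ∀ i, i ∉ P → g i ≤ -1) : ∑ i, g i ≤ -(m : ℤ) := by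
  classical
  set Q := P.image e with hQ
  have hdisj : Disjoint P Q := by
    rw [Finset.disjoint_right]
    intro j hj hjP
    rcases Finset.mem_image.mp hj with ⟨i, hi, rfl⟩
    exact hout i hi hjP
  have hQcard : Q.card = P.card := Finset.card_image_of_injective _ e.injective
  have hsum1 : ∑ i ∈ P ∪ Q, g i = ∑ i ∈ P, (g i + g (e i)) := by
    rw [Finset.sum_union hdisj, hQ, Finset.sum_image (fun a _ b _ h => e.injective h),
      Finset.sum_add_distrib]
  have h1 : ∑ i ∈ P ∪ Q, g i ≤ -2 * P.card := by
    rw [hsum1]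
    calc ∑ i ∈ P, (g i + g (e i)) ≤ ∑ _i ∈ P, (-2 : ℤ) := Finset.sum_le_sum hpair
    _ = -2 * P.card := by rw [Finset.sum_const]; push_cast; ring
  have h2 : ∑ i ∈ (P ∪ Q)ᶜ, g i ≤ -(((P ∪ Q)ᶜ).card : ℤ) := by
    calc ∑ i ∈ (P ∪ Q)ᶜ, g i ≤ ∑ _i ∈ (P ∪ Q)ᶜ, (-1 : ℤ) := by
          apply Finset.sum_le_sum
          intro i hi
          apply hrest
          intro hiP
          exact (Finset.mem_compl.mp hi) (Finset.mem_union_left _ hiP)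
    _ = -(((P ∪ Q)ᶜ).card : ℤ) := by rw [Finset.sum_const]; push_cast; ring
  have hcardU : (P ∪ Q).card = 2 * P.card := by
    rw [Finset.card_union_of_disjoint hdisj, hQcard]; ring
  have hle : (P ∪ Q).card ≤ m := by
    simpa using Finset.card_le_univ (P ∪ Q)
  have hcardC : (((P ∪ Q)ᶜ).card : ℤ) = (m : ℤ) - 2 * P.card := by
    rw [Finset.card_compl, Fintype.card_fin, Nat.cast_sub hle, hcardU]
    push_cast; ring
  have htot : ∑ i ∈ P ∪ Q, g i + ∑ i ∈ (P ∪ Q)ᶜ, g i = ∑ i, g i :=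
    Finset.sum_add_sum_compl _ _
  rw [← htot]
  rw [hcardC] at h2
  linarith

omit [NeZero m] in
lemma part_ge (g : Fin m → ℤ) (P : Finset (Fin m)) (e : Fin m ≃ Fin m)
    (hpair : ∀ i ∈ P, 0 ≤ g i + g (e i)) (hout : ∀ i ∈ P, e i ∉ P)
    (hrest : ∀ i, i ∉ P → 0 ≤ g i) : 0 ≤ ∑ i, g i := by
  classical
  set Q := P.image e with hQ
  have hdisj : Disjoint P Q := by
    rw [Finset.disjoint_right]
    intro j hj hjP
    rcases Finset.mem_image.mp hj with ⟨i, hi, rfl⟩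
    exact hout i hi hjP
  have hsum1 : ∑ i ∈ P ∪ Q, g i = ∑ i ∈ P, (g i + g (e i)) := by
    rw [Finset.sum_union hdisj, hQ, Finset.sum_image (fun a _ b _ h => e.injective h),
      Finset.sum_add_distrib]
  have h1 : 0 ≤ ∑ i ∈ P ∪ Q, g i := by
    rw [hsum1]; exact Finset.sum_nonneg hpair
  have h2 : 0 ≤ ∑ i ∈ (P ∪ Q)ᶜ, g i := by
    apply Finset.sum_nonneg
    intro i hi
    apply hrest
    intro hiP
    exact (Finset.mem_compl.mp hi) (Finset.mem_union_left _ hiP)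
  have htot : ∑ i ∈ P ∪ Q, g i + ∑ i ∈ (P ∪ Q)ᶜ, g i = ∑ i, g i :=
    Finset.sum_add_sum_compl _ _
  linarith

/-- Master lemma 1: if all points `(g i, g (i+1))` lie strictly below the line
`y + 1 = λ x`, then the total sum is `≥ 0` or `≤ -m`. -/
lemma ML (g : Fin m → ℤ) (lam : ℝ) (h : ∀ i, (g (i + 1) : ℝ) + 1 < lam * g i) :
    0 ≤ ∑ i, g i ∨ ∑ i, g i ≤ -(m : ℤ) := by
  classical
  rcases le_or_gt 0 lam with hl | hl
  · -- λ ≥ 0 : the set of indices with negative value is closed under successor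
    have hcl : ∀ i, g i ≤ -1 → g (i + 1) ≤ -1 := by
      intro i hi
      have h1 : lam * (g i : ℝ) ≤ 0 := by
        apply mul_nonpos_of_nonneg_of_nonpos hl
        have : (g i : ℝ) ≤ -1 := by exact_mod_cast hi
        linarith
      have := h i
      have : (g (i + 1) : ℝ) < -1 := by linarith
      have : (g (i+1) : ℤ) < -1 := by exact_mod_cast this
      omega
    by_cases hex : ∃ i, g i ≤ -1
    · rcases hex with ⟨i, hi⟩
      right
      have hall : ∀ j, g j ≤ -1 := cyc_all _ hcl i hi
      calc ∑ i, g i ≤ ∑ _i : Fin m, (-1 : ℤ) := Finset.sum_le_sum (fun j _ => hall j)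
      _ = -(m : ℤ) := by simp
    · left
      push_neg at hex
      exact Finset.sum_nonneg (fun j _ => by have := hex j; omega)
  · -- λ < 0
    have hsucc_neg : ∀ i, 0 ≤ g i → g (i + 1) ≤ -1 := by
      intro i hi
      have h1 : lam * (g i : ℝ) ≤ 0 := by
        apply mul_nonpos_of_nonpos_of_nonneg hl.le
        exact_mod_cast hi
      have := h i
      have : (g (i + 1) : ℝ) < -1 := by linarith
      have : (g (i+1) : ℤ) < -1 := by exact_mod_cast this
      omega
    rcases le_or_gt lam (-1) with hl1 | hl1
    · -- λ ≤ -1 : pair each nonnegative with its successor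
      right
      apply part_le g (Finset.univ.filter (fun i => 0 ≤ g i)) (Equiv.addRight 1)
      · intro i hi
        have hi' : 0 ≤ g i := (Finset.mem_filter.mp hi).2
        have h2 : lam * (g i : ℝ) ≤ -(g i : ℝ) := by
          have : (0:ℝ) ≤ (g i : ℝ) := by exact_mod_cast hi'
          nlinarith
        have := h i
        have hr : (g (i + 1) : ℝ) < -(g i : ℝ) - 1 := by linarith
        have : (g (i+1) : ℤ) < -(g i) - 1 := by exact_mod_cast hr
        simpa [Equiv.addRight] using by omega
      · intro i hi
        have hi' : 0 ≤ g i := (Finset.mem_filter.mp hi).2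
        have := hsucc_neg i hi'
        simp only [Finset.mem_filter, Finset.mem_univ, true_and, not_le, Equiv.coe_addRight]
        omega
      · intro i hi
        simp only [Finset.mem_filter, Finset.mem_univ, true_and, not_le] at hi
        omega
    · -- -1 < λ < 0 : pair each nonnegative with its predecessor
      right
      have esr : ∀ j : Fin m, (Equiv.subRight (1 : Fin m)) j = j - 1 := fun j => rfl
      apply part_le g (Finset.univ.filter (fun i => 0 ≤ g i)) (Equiv.subRight 1)
      · intro i hi
        rw [esr]
        have hi' : 0 ≤ g i := (Finset.mem_filter.mp hi).2
        have hcon := h (i - 1)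
        rw [sub_add_cancel] at hcon
        -- (g i : ℝ) + 1 < lam * g (i-1)
        have hgpos : (0:ℝ) < (g i : ℝ) + 1 := by
          have : (0:ℝ) ≤ (g i : ℝ) := by exact_mod_cast hi'
          linarith
        -- claim g (i-1) + g i ≤ -2
        by_contra hcontra
        push_neg at hcontra
        -- hcontra : -2 < g i + g (i - 1)  (order?)
        have hge : (-(g i) - 1 : ℤ) ≤ g (i - 1) := by omega
        have hgeR : (-(g i : ℝ) - 1) ≤ (g (i - 1) : ℝ) := by exact_mod_cast hge
        have : lam * (g (i-1) : ℝ) ≤ lam * (-(g i : ℝ) - 1) :=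
          mul_le_mul_of_nonpos_left hgeR hl.le
        nlinarith
      · intro i hi
        have hi' : 0 ≤ g i := (Finset.mem_filter.mp hi).2
        have hcon := h (i - 1)
        rw [sub_add_cancel] at hcon
        have hgpos : (0:ℝ) < (g i : ℝ) + 1 := by
          have : (0:ℝ) ≤ (g i : ℝ) := by exact_mod_cast hi'
          linarith
        have hneg : lam * (g (i-1) : ℝ) > 0 := by linarith
        have : (g (i - 1) : ℝ) < 0 := by
          by_contra hc
          push_neg at hc
          nlinarith
        have : g (i - 1) < 0 := by exact_mod_cast this
        rw [esr]
        simp only [Finset.mem_filter, Finset.mem_univ, true_and, not_le]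
        omega
      · intro i hi
        simp only [Finset.mem_filter, Finset.mem_univ, true_and, not_le] at hi
        omega

/-- Master lemma 2: if all points `(g i, g (i+1))` lie strictly above the line
`λ x + y + 1 = 0`, then the total sum is `≥ 0` or `≤ -m`. -/
lemma ML2 (g : Fin m → ℤ) (lam : ℝ) (h : ∀ i, (0:ℝ) < lam * g i + g (i + 1) + 1) :
    0 ≤ ∑ i, g i ∨ ∑ i, g i ≤ -(m : ℤ) := by
  classical
  rcases lt_or_ge lam 0 with hl | hl
  · -- λ < 0 : nonnegatives are closed under successor
    have hcl : ∀ i, 0 ≤ g i → 0 ≤ g (i + 1) := by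
      intro i hi
      have h1 : lam * (g i : ℝ) ≤ 0 := by
        apply mul_nonpos_of_nonpos_of_nonneg hl.le
        exact_mod_cast hi
      have := h i
      have : (-1:ℝ) < (g (i + 1) : ℝ) := by linarith
      have : (-1:ℤ) < g (i+1) := by exact_mod_cast this
      omega
    by_cases hex : ∃ i, 0 ≤ g i
    · rcases hex with ⟨i, hi⟩
      left
      exact Finset.sum_nonneg (fun j _ => cyc_all _ hcl i hi j)
    · right
      push_neg at hex
      calc ∑ i, g i ≤ ∑ _i : Fin m, (-1 : ℤ) :=
            Finset.sum_le_sum (fun j _ => by have := hex j; omega)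
      _ = -(m : ℤ) := by simp
  · rcases le_or_gt 1 lam with hl1 | hl1
    · -- λ ≥ 1 : pair each negative with its successor
      left
      apply part_ge g (Finset.univ.filter (fun i => g i ≤ -1)) (Equiv.addRight 1)
      · intro i hi
        have hi' : g i ≤ -1 := (Finset.mem_filter.mp hi).2
        have h2 : -(g i : ℝ) ≤ lam * (g i : ℝ) * (-1) := by
          have : (g i : ℝ) ≤ -1 := by exact_mod_cast hi'
          nlinarith
        have := h i
        have hr : -(g i : ℝ) - 1 < (g (i + 1) : ℝ) := by nlinarith
        have : -(g i) - 1 < g (i+1) := by exact_mod_cast hr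
        simp only [Equiv.coe_addRight]
        omega
      · intro i hi
        have hi' : g i ≤ -1 := (Finset.mem_filter.mp hi).2
        have := h i
        have h2 : lam * (g i : ℝ) ≤ -(g i : ℝ) * 1 := by
          have : (g i : ℝ) ≤ -1 := by exact_mod_cast hi'
          nlinarith
        have hr : -(g i : ℝ) - 1 < (g (i + 1) : ℝ) := by nlinarith
        have hz : -(g i) - 1 < g (i+1) := by exact_mod_cast hr
        simp only [Finset.mem_filter, Finset.mem_univ, true_and, not_le, Equiv.coe_addRight]
        omega
      · intro i hi
        simp only [Finset.mem_filter, Finset.mem_univ, true_and, not_le] at hi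
        omega
    · -- 0 ≤ λ < 1 : pair each negative with its predecessor
      left
      have esr : ∀ j : Fin m, (Equiv.subRight (1 : Fin m)) j = j - 1 := fun j => rfl
      apply part_ge g (Finset.univ.filter (fun i => g i ≤ -1)) (Equiv.subRight 1)
      · intro i hi
        rw [esr]
        have hi' : g i ≤ -1 := (Finset.mem_filter.mp hi).2
        have hcon := h (i - 1)
        rw [sub_add_cancel] at hcon
        -- 0 < lam * g (i-1) + g i + 1, with g i + 1 ≤ 0
        have hgneg : (g i : ℝ) + 1 ≤ 0 := by
          have : (g i : ℝ) ≤ -1 := by exact_mod_cast hi'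
          linarith
        have hppos : 0 < lam * (g (i-1) : ℝ) := by linarith
        have hp1 : (0:ℝ) < (g (i - 1) : ℝ) := by
          by_contra hc
          push_neg at hc
          nlinarith
        by_contra hcontra
        push_neg at hcontra
        -- g i + g (i - 1) < 0 so g (i-1) ≤ -g i - 1
        have hge : (g (i - 1) : ℤ) ≤ -(g i) - 1 := by omega
        have hgeR : (g (i - 1) : ℝ) ≤ -(g i : ℝ) - 1 := by exact_mod_cast hge
        have : lam * (g (i-1) : ℝ) < (g (i-1) : ℝ) := by nlinarith
        nlinarith
      · intro i hi
        have hi' : g i ≤ -1 := (Finset.mem_filter.mp hi).2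
        have hcon := h (i - 1)
        rw [sub_add_cancel] at hcon
        have hgneg : (g i : ℝ) + 1 ≤ 0 := by
          have : (g i : ℝ) ≤ -1 := by exact_mod_cast hi'
          linarith
        have hppos : 0 < lam * (g (i-1) : ℝ) := by linarith
        have hp1 : (0:ℝ) < (g (i - 1) : ℝ) := by
          by_contra hc
          push_neg at hc
          nlinarith
        have hz : 0 < g (i - 1) := by exact_mod_cast hp1
        rw [esr]
        simp only [Finset.mem_filter, Finset.mem_univ, true_and, not_le]
        omega
      · intro i hi
        simp only [Finset.mem_filter, Finset.mem_univ, true_and, not_le] at hi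
        omega

/-- The convex crossing of two edges at the vertical line `x = a`. -/
lemma cross_mem (R : Set (ℝ × ℝ)) (hR : Convex ℝ R)
    (s : Fin m → ℤ) (hc : ∀ i, ((s i : ℝ), (s (i + 1) : ℝ)) ∈ R) (a : ℤ)
    (i j : Fin m) (hj : s j < a) (hi : a < s i) :
    ∃ y : ℝ, ((a:ℝ), y) ∈ R ∧
      y * ((s i : ℝ) - s j) =
        ((a:ℝ) - s j) * (s (i+1) : ℝ) + ((s i:ℝ) - a) * (s (j+1) : ℝ) := by
  have hjR : (s j : ℝ) < (a : ℝ) := by exact_mod_cast hj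
  have hiR : (a : ℝ) < (s i : ℝ) := by exact_mod_cast hi
  have hd : (0:ℝ) < (s i : ℝ) - s j := by linarith
  have hd' : ((s i : ℝ) - s j) ≠ 0 := ne_of_gt hd
  set θ : ℝ := ((a:ℝ) - s j) / ((s i : ℝ) - s j) with hθ
  have hθ0 : 0 ≤ θ := div_nonneg (by linarith) hd.le
  have hθ1 : θ ≤ 1 := by rw [hθ, div_le_one hd]; linarith
  have hmem := hR (hc i) (hc j) hθ0 (by linarith : (0:ℝ) ≤ 1 - θ) (by ring)
  have hpair : θ • (((s i : ℝ), (s (i+1) : ℝ)) : ℝ × ℝ)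
      + (1 - θ) • (((s j : ℝ), (s (j+1) : ℝ)) : ℝ × ℝ)
      = ((θ * s i + (1-θ) * s j : ℝ), (θ * (s (i+1) : ℝ) + (1-θ) * (s (j+1) : ℝ))) := by
    simp [Prod.smul_mk, Prod.mk_add_mk]
  rw [hpair] at hmem
  have hx : θ * (s i : ℝ) + (1-θ) * s j = (a : ℝ) := by
    rw [hθ]; field_simp; ring
  rw [hx] at hmem
  refine ⟨θ * (s (i+1) : ℝ) + (1-θ) * (s (j+1) : ℝ), hmem, ?_⟩
  rw [hθ]; field_simp; ring

lemma slice_hi (R : Set (ℝ × ℝ)) (hR : Convex ℝ R)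
    (s : Fin m → ℤ) (hc : ∀ i, ((s i : ℝ), (s (i + 1) : ℝ)) ∈ R)
    (a : ℤ) (hlo : (m:ℤ) * a - m < ∑ i, s i) (hhi : ∑ i, s i < (m:ℤ) * a) :
    ∃ y : ℝ, ((a : ℝ), y) ∈ R ∧ (a:ℝ) - 1 ≤ y := by
  classical
  by_contra hno
  push_neg at hno
  -- hno : ∀ y, ((a:ℝ), y) ∈ R → y < (a:ℝ) - 1
  -- notation
  set W : Fin m → ℝ := fun i => ((s (i+1) : ℝ) - ((a:ℝ) - 1)) / ((s i : ℝ) - a) with hW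
  set N : Finset (Fin m) := Finset.univ.filter (fun j => s j < a) with hN
  set P : Finset (Fin m) := Finset.univ.filter (fun i => a < s i) with hP
  -- N is nonempty
  have hNne : N.Nonempty := by
    by_contra hne
    rw [Finset.not_nonempty_iff_eq_empty] at hne
    have hall : ∀ j : Fin m, a ≤ s j := by
      intro j
      by_contra hcj
      push_neg at hcj
      have : j ∈ N := by rw [hN]; simp [hcj]
      rw [hne] at this; simp at this
    have : (m:ℤ) * a ≤ ∑ i, s i := by
      calc (m:ℤ) * a = ∑ _i : Fin m, a := by
            rw [Finset.sum_const, Finset.card_univ, Fintype.card_fin, nsmul_eq_mul]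
      _ ≤ ∑ i, s i := Finset.sum_le_sum (fun i _ => hall i)
    linarith
  -- key inequality from crossing points
  have hEneg : ∀ i ∈ P, ∀ j ∈ N,
      ((a:ℝ) - s j) * ((s (i+1) : ℝ) - ((a:ℝ) - 1))
        + ((s i:ℝ) - a) * ((s (j+1) : ℝ) - ((a:ℝ) - 1)) < 0 := by
    intro i hi j hj
    have hi' : a < s i := by rw [hP] at hi; simpa using hi
    have hj' : s j < a := by rw [hN] at hj; simpa using hj
    obtain ⟨y, hyR, hyE⟩ := cross_mem R hR s hc a i j hj' hi'
    have hylt : y < (a:ℝ) - 1 := hno y hyR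
    have hjR : (s j : ℝ) < (a : ℝ) := by exact_mod_cast hj'
    have hiR : (a : ℝ) < (s i : ℝ) := by exact_mod_cast hi'
    have hd : (0:ℝ) < (s i : ℝ) - s j := by linarith
    nlinarith [hyE, mul_lt_mul_of_pos_right hylt hd]
  -- slope comparison : W i < W j for i ∈ P, j ∈ N
  have hWlt : ∀ i ∈ P, ∀ j ∈ N, W i < W j := by
    intro i hi j hj
    have hi' : a < s i := by rw [hP] at hi; simpa using hi
    have hj' : s j < a := by rw [hN] at hj; simpa using hj
    have hiR : (a : ℝ) < (s i : ℝ) := by exact_mod_cast hi'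
    have hjR : (s j : ℝ) < (a : ℝ) := by exact_mod_cast hj'
    have hdi : (0:ℝ) < (s i : ℝ) - a := by linarith
    have hdj : (0:ℝ) < (a:ℝ) - s j := by linarith
    have hE := hEneg i hi j hj
    rw [hW]
    show ((s (i+1) : ℝ) - ((a:ℝ) - 1)) / ((s i : ℝ) - a)
      < ((s (j+1) : ℝ) - ((a:ℝ) - 1)) / ((s j : ℝ) - a)
    have hrw : ((s (j+1) : ℝ) - ((a:ℝ) - 1)) / ((s j : ℝ) - a)
        = (-((s (j+1) : ℝ) - ((a:ℝ) - 1))) / ((a:ℝ) - s j) := by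
      rw [div_eq_div_iff (by linarith : ((s j : ℝ) - a) ≠ 0) (ne_of_gt hdj)]; ring
    rw [hrw, div_lt_div_iff₀ hdi hdj]
    nlinarith [hE]
  -- choose lambda
  obtain ⟨j₀, hj₀N, hj₀min⟩ := N.exists_min_image W hNne
  have hlam : ∃ lam : ℝ, (∀ i ∈ P, W i < lam) ∧ (∀ j ∈ N, lam < W j) := by
    rcases P.eq_empty_or_nonempty with hPe | hPne
    · refine ⟨W j₀ - 1, ?_, ?_⟩
      · intro i hi; rw [hPe] at hi; simp at hi
      · intro j hj
        have := hj₀min j hj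
        linarith
    · obtain ⟨i₀, hi₀P, hi₀max⟩ := P.exists_max_image W hPne
      refine ⟨(W i₀ + W j₀) / 2, ?_, ?_⟩
      · intro i hi
        have h1 := hi₀max i hi
        have h2 := hWlt i₀ hi₀P j₀ hj₀N
        linarith
      · intro j hj
        have h1 := hj₀min j hj
        have h2 := hWlt i₀ hi₀P j₀ hj₀N
        linarith
  obtain ⟨lam, hlamP, hlamN⟩ := hlam
  -- apply the master lemma to v := s - a
  have hML := ML (fun i => s i - a) lam ?_
  · have hsum : ∑ i, (s i - a) = (∑ i, s i) - (m:ℤ) * a := by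
      rw [Finset.sum_sub_distrib, Finset.sum_const, Finset.card_univ, Fintype.card_fin,
        nsmul_eq_mul]
    rw [hsum] at hML
    rcases hML with h1 | h1 <;> [linarith; · push_cast at h1; linarith]
  · intro k
    push_cast
    rcases lt_trichotomy (s k) a with hk | hk | hk
    · -- s k < a : lam < W k, multiply by negative denominator
      have hkN : k ∈ N := by rw [hN]; simp [hk]
      have hlt := hlamN k hkN
      have hkR : (s k : ℝ) < (a : ℝ) := by exact_mod_cast hk
      have hdneg : (s k : ℝ) - a < 0 := by linarith
      have := mul_lt_mul_of_neg_right hlt hdneg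
      rw [hW] at this
      simp only at this
      rw [div_mul_cancel₀ _ (ne_of_lt hdneg)] at this
      linarith
    · -- s k = a
      have hyR := hc k
      rw [hk] at hyR
      have := hno _ hyR
      have hklam : ((s k : ℝ) - a) = 0 := by
        rw [hk]; ring
      rw [show ((s k : ℤ) : ℝ) - (a:ℝ) = ((s k : ℝ) - a) from rfl] at *
      have : (s (k+1) : ℝ) < (a:ℝ) - 1 := this
      calc (s (k+1) : ℝ) - (a:ℝ) + 1 < 0 := by linarith
      _ ≤ lam * ((s k : ℝ) - (a:ℝ)) := by rw [hk]; simp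
    · -- a < s k : W k < lam, multiply by positive denominator
      have hkP : k ∈ P := by rw [hP]; simp [hk]
      have hlt := hlamP k hkP
      have hkR : (a : ℝ) < (s k : ℝ) := by exact_mod_cast hk
      have hdpos : (0:ℝ) < (s k : ℝ) - a := by linarith
      have := mul_lt_mul_of_pos_right hlt hdpos
      rw [hW] at this
      simp only at this
      rw [div_mul_cancel₀ _ (ne_of_gt hdpos)] at this
      linarith

lemma slice_lo (R : Set (ℝ × ℝ)) (hR : Convex ℝ R)
    (s : Fin m → ℤ) (hc : ∀ i, ((s i : ℝ), (s (i + 1) : ℝ)) ∈ R)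
    (a : ℤ) (hlo : (m:ℤ) * a - m < ∑ i, s i) (hhi : ∑ i, s i < (m:ℤ) * a) :
    ∃ y : ℝ, ((a : ℝ), y) ∈ R ∧ y ≤ (a:ℝ) - 1 := by
  classical
  by_contra hno
  push_neg at hno
  -- hno : ∀ y, ((a:ℝ), y) ∈ R → (a:ℝ) - 1 < y
  set W : Fin m → ℝ := fun i => (((a:ℝ) - 1) - (s (i+1) : ℝ)) / ((s i : ℝ) - a) with hW
  set N : Finset (Fin m) := Finset.univ.filter (fun j => s j < a) with hN
  set P : Finset (Fin m) := Finset.univ.filter (fun i => a < s i) with hP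
  have hNne : N.Nonempty := by
    by_contra hne
    rw [Finset.not_nonempty_iff_eq_empty] at hne
    have hall : ∀ j : Fin m, a ≤ s j := by
      intro j
      by_contra hcj
      push_neg at hcj
      have : j ∈ N := by rw [hN]; simp [hcj]
      rw [hne] at this; simp at this
    have : (m:ℤ) * a ≤ ∑ i, s i := by
      calc (m:ℤ) * a = ∑ _i : Fin m, a := by
            rw [Finset.sum_const, Finset.card_univ, Fintype.card_fin, nsmul_eq_mul]
      _ ≤ ∑ i, s i := Finset.sum_le_sum (fun i _ => hall i)
    linarith
  have hEpos : ∀ i ∈ P, ∀ j ∈ N,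
      0 < ((a:ℝ) - s j) * ((s (i+1) : ℝ) - ((a:ℝ) - 1))
        + ((s i:ℝ) - a) * ((s (j+1) : ℝ) - ((a:ℝ) - 1)) := by
    intro i hi j hj
    have hi' : a < s i := by rw [hP] at hi; simpa using hi
    have hj' : s j < a := by rw [hN] at hj; simpa using hj
    obtain ⟨y, hyR, hyE⟩ := cross_mem R hR s hc a i j hj' hi'
    have hylt : (a:ℝ) - 1 < y := hno y hyR
    have hjR : (s j : ℝ) < (a : ℝ) := by exact_mod_cast hj'
    have hiR : (a : ℝ) < (s i : ℝ) := by exact_mod_cast hi'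
    have hd : (0:ℝ) < (s i : ℝ) - s j := by linarith
    nlinarith [hyE, mul_lt_mul_of_pos_right hylt hd]
  have hWlt : ∀ i ∈ P, ∀ j ∈ N, W i < W j := by
    intro i hi j hj
    have hi' : a < s i := by rw [hP] at hi; simpa using hi
    have hj' : s j < a := by rw [hN] at hj; simpa using hj
    have hiR : (a : ℝ) < (s i : ℝ) := by exact_mod_cast hi'
    have hjR : (s j : ℝ) < (a : ℝ) := by exact_mod_cast hj'
    have hdi : (0:ℝ) < (s i : ℝ) - a := by linarith
    have hdj : (0:ℝ) < (a:ℝ) - s j := by linarith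
    have hE := hEpos i hi j hj
    rw [hW]
    show (((a:ℝ) - 1) - (s (i+1) : ℝ)) / ((s i : ℝ) - a)
      < (((a:ℝ) - 1) - (s (j+1) : ℝ)) / ((s j : ℝ) - a)
    have hrw : (((a:ℝ) - 1) - (s (j+1) : ℝ)) / ((s j : ℝ) - a)
        = (-(((a:ℝ) - 1) - (s (j+1) : ℝ))) / ((a:ℝ) - s j) := by
      rw [div_eq_div_iff (by linarith : ((s j : ℝ) - a) ≠ 0) (ne_of_gt hdj)]; ring
    rw [hrw, div_lt_div_iff₀ hdi hdj]
    nlinarith [hE]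
  obtain ⟨j₀, hj₀N, hj₀min⟩ := N.exists_min_image W hNne
  have hlam : ∃ lam : ℝ, (∀ i ∈ P, W i < lam) ∧ (∀ j ∈ N, lam < W j) := by
    rcases P.eq_empty_or_nonempty with hPe | hPne
    · refine ⟨W j₀ - 1, ?_, ?_⟩
      · intro i hi; rw [hPe] at hi; simp at hi
      · intro j hj
        have := hj₀min j hj
        linarith
    · obtain ⟨i₀, hi₀P, hi₀max⟩ := P.exists_max_image W hPne
      refine ⟨(W i₀ + W j₀) / 2, ?_, ?_⟩
      · intro i hi
        have h1 := hi₀max i hi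
        have h2 := hWlt i₀ hi₀P j₀ hj₀N
        linarith
      · intro j hj
        have h1 := hj₀min j hj
        have h2 := hWlt i₀ hi₀P j₀ hj₀N
        linarith
  obtain ⟨lam, hlamP, hlamN⟩ := hlam
  have hML := ML2 (fun i => s i - a) lam ?_
  · have hsum : ∑ i, (s i - a) = (∑ i, s i) - (m:ℤ) * a := by
      rw [Finset.sum_sub_distrib, Finset.sum_const, Finset.card_univ, Fintype.card_fin,
        nsmul_eq_mul]
    rw [hsum] at hML
    rcases hML with h1 | h1 <;> [linarith; · push_cast at h1; linarith]
  · intro k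
    push_cast
    rcases lt_trichotomy (s k) a with hk | hk | hk
    · have hkN : k ∈ N := by rw [hN]; simp [hk]
      have hlt := hlamN k hkN
      have hkR : (s k : ℝ) < (a : ℝ) := by exact_mod_cast hk
      have hdneg : (s k : ℝ) - a < 0 := by linarith
      have := mul_lt_mul_of_neg_right hlt hdneg
      rw [hW] at this
      simp only at this
      rw [div_mul_cancel₀ _ (ne_of_lt hdneg)] at this
      linarith
    · have hyR := hc k
      rw [hk] at hyR
      have hgt := hno _ hyR
      have hklam : lam * ((s k : ℝ) - (a:ℝ)) = 0 := by
        rw [hk]; push_cast; ring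
      have : (s (k+1) : ℝ) - (a:ℝ) + 1 > 0 := by
        push_cast at hgt ⊢; linarith
      push_cast at hklam ⊢
      linarith
    · have hkP : k ∈ P := by rw [hP]; simp [hk]
      have hlt := hlamP k hkP
      have hkR : (a : ℝ) < (s k : ℝ) := by exact_mod_cast hk
      have hdpos : (0:ℝ) < (s k : ℝ) - a := by linarith
      have := mul_lt_mul_of_pos_right hlt hdpos
      rw [hW] at this
      simp only at this
      rw [div_mul_cancel₀ _ (ne_of_gt hdpos)] at this
      linarith

end CycleHelpers

lemma keyLemma {m : ℕ} [NeZero m] (R : Set (ℝ × ℝ)) (hR : Convex ℝ R)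
    (s : Fin m → ℤ) (hc : ∀ i, ((s i : ℝ), (s (i + 1) : ℝ)) ∈ R)
    (a : ℤ) (hlo : (m:ℤ) * a - m < ∑ i, s i) (hhi : ∑ i, s i < (m:ℤ) * a) :
    ((a : ℝ), (a:ℝ) - 1) ∈ R := by
  obtain ⟨y₁, hy₁R, hy₁⟩ := slice_hi R hR s hc a hlo hhi
  obtain ⟨y₂, hy₂R, hy₂⟩ := slice_lo R hR s hc a hlo hhi
  rcases eq_or_lt_of_le (hy₂.trans hy₁) with he | hlt
  · have h1 : y₁ = (a:ℝ) - 1 := le_antisymm (by rw [← he] at hy₁ ⊢; linarith) hy₁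
    rwa [h1] at hy₁R
  · set τ : ℝ := (y₁ - ((a:ℝ)-1)) / (y₁ - y₂) with hτ
    have hd : (0:ℝ) < y₁ - y₂ := by linarith
    have hτ0 : 0 ≤ τ := div_nonneg (by linarith) hd.le
    have hτ1 : τ ≤ 1 := by rw [hτ, div_le_one hd]; linarith
    have hmem := hR hy₁R hy₂R (by linarith : (0:ℝ) ≤ 1 - τ) hτ0 (by ring)
    have hpair : (1-τ) • (((a:ℝ), y₁) : ℝ × ℝ) + τ • (((a:ℝ), y₂) : ℝ × ℝ)
        = ((a:ℝ), (1-τ) * y₁ + τ * y₂) := by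
      simp [Prod.smul_mk, Prod.mk_add_mk]; ring
    rw [hpair] at hmem
    have hy : (1-τ) * y₁ + τ * y₂ = (a:ℝ) - 1 := by
      rw [hτ]; field_simp; ring
    rwa [hy] at hmem

theorem stmt_2 (R : Set (ℝ × ℝ)) (hR : Convex ℝ R) (m : ℕ) [NeZero m]
    (s : Fin m → ℤ) (hs : Function.Injective s)
    (hc : ∀ i : Fin m, (((s i : ℝ)), ((s (i + 1) : ℝ))) ∈ R) :
    ∃ a b : ℤ, ((a : ℝ), (b : ℝ)) ∈ R ∧ ((b : ℝ), (a : ℝ)) ∈ R := by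
  classical
  have hm0 : 0 < m := Nat.pos_of_ne_zero (NeZero.ne m)
  set T : ℤ := ∑ i, s i with hT
  by_cases hdvd : (m:ℤ) ∣ T
  · -- centroid case
    obtain ⟨c, hc'⟩ := hdvd
    refine ⟨c, c, ?_, ?_⟩ <;>
    · have hmem := hR.sum_mem (t := Finset.univ)
        (w := fun _ : Fin m => (1 : ℝ) / m)
        (z := fun i : Fin m => (((s i : ℝ), (s (i+1) : ℝ)) : ℝ × ℝ))
        (fun i _ => by positivity)
        (by
          rw [Finset.sum_const, Finset.card_univ, Fintype.card_fin, nsmul_eq_mul]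
          field_simp)
        (fun i _ => hc i)
      have hsum2 : ∑ i : Fin m, (s (i+1) : ℝ) = (T : ℝ) := by
        rw [hT]
        push_cast
        exact Fintype.sum_equiv (Equiv.addRight (1 : Fin m)) _ _ (fun i => rfl)
      have hsum1 : ∑ i : Fin m, (s i : ℝ) = (T : ℝ) := by rw [hT]; push_cast; rfl
      have heval : (∑ i : Fin m, ((1:ℝ)/m) • (((s i : ℝ), (s (i+1) : ℝ)) : ℝ × ℝ))
          = ((c : ℝ), (c : ℝ)) := by
        rw [← Finset.smul_sum]
        have : (∑ i : Fin m, (((s i : ℝ), (s (i+1) : ℝ)) : ℝ × ℝ))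
            = ((T:ℝ), (T:ℝ)) := by
          rw [Prod.ext_iff]
          constructor
          · rw [Prod.fst_sum]; simpa using hsum1
          · rw [Prod.snd_sum]; simpa using hsum2
        rw [this]
        have hmne : (m:ℝ) ≠ 0 := by positivity
        have hTc : (T : ℝ) = (m : ℝ) * c := by exact_mod_cast congrArg (Int.cast : ℤ → ℝ) hc'
        simp [Prod.smul_mk, hTc]
        field_simp
      rwa [heval] at hmem
  · -- non-divisible case
    have hm0' : (0:ℤ) < m := by exact_mod_cast hm0
    set a : ℤ := T / m + 1 with ha
    have hmod1 : 0 ≤ T % m := Int.emod_nonneg T (by exact_mod_cast (NeZero.ne m))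
    have hmod2 : T % m < m := Int.emod_lt_of_pos T hm0'
    have hmod3 : T % m ≠ 0 := fun h => hdvd (Int.dvd_of_emod_eq_zero h)
    have hdm : (m:ℤ) * (T / m) + T % m = T := Int.mul_ediv_add_emod T m
    have hlo : (m:ℤ) * a - m < T := by rw [ha]; ring_nf; omega
    have hhi : T < (m:ℤ) * a := by rw [ha]; ring_nf; omega
    have h1 : ((a : ℝ), (a:ℝ) - 1) ∈ R := keyLemma R hR s hc a hlo hhi
    -- reversed cycle for the transposed point
    set R' : Set (ℝ × ℝ) := (fun p : ℝ × ℝ => (p.2, p.1)) '' R with hR'def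
    have hR' : Convex ℝ R' := by
      have : R' = (LinearEquiv.prodComm ℝ ℝ ℝ).toLinearMap '' R := rfl
      rw [this]
      exact hR.linear_image _
    set s' : Fin m → ℤ := fun i => s (-i) with hs'
    have hc' : ∀ i, ((s' i : ℝ), (s' (i + 1) : ℝ)) ∈ R' := by
      intro i
      refine ⟨((s (-i - 1) : ℝ), (s (-i) : ℝ)), ?_, ?_⟩
      · have := hc (-i - 1)
        simpa using this
      · rw [hs']
        simp only
        have h1 : -(i + 1) = -i - 1 := neg_add' i 1
        rw [h1]
    have hssum : ∑ i, s' i = T := by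
      rw [hs', hT]
      exact Fintype.sum_equiv (Equiv.neg (Fin m)) _ _ (fun i => rfl)
    have h2 : ((a : ℝ), (a:ℝ) - 1) ∈ R' := by
      apply keyLemma R' hR' s' hc' a <;> rw [hssum]
      · exact hlo
      · exact hhi
    obtain ⟨p, hpR, hpe⟩ := h2
    have hp : p = ((a:ℝ) - 1, (a:ℝ)) := by
      have h1 := congrArg Prod.fst hpe
      have h2 := congrArg Prod.snd hpe
      simp at h1 h2
      exact Prod.ext h2 h1
    rw [hp] at hpR
    refine ⟨a, a - 1, ?_, ?_⟩
    · rwa [show ((a - 1 : ℤ) : ℝ) = (a:ℝ) - 1 by push_cast; ring]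
    · rwa [show ((a - 1 : ℤ) : ℝ) = (a:ℝ) - 1 by push_cast; ring]
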